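/- The 3x3 Hankel determinant hypersurface in P^4 (the secant variety of the rational normal quartic) is singular precisely along the rational normal quartic curve, i.e. along the locus where the Hankel matrix has rank at most 1. -/

import Mathlib

/-!
STATEMENT 6: The cubic hypersurface X ⊂ ℙ⁴ defined by the determinant F of the 3×3 Hankel
matrix ((Z₀,Z₁,Z₂),(Z₁,Z₂,Z₃),(Z₂,Z₃,Z₄)) (the secant variety of the rational normal
quartic) is singular precisely along the rational normal quartic curve, i.e. along the locus
where the Hankel matrix has rank at most 1.  Stated on the affine cone: for nonzero z ∈ ℂ⁵,
all partial derivatives of F vanish at z iff rank(hankel z) ≤ 1, iff z lies on the cone over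
the rational normal quartic.
-/

open MvPolynomial

/-- The 3×3 Hankel matrix of z ∈ ℂ⁵. -/
def hankel (z : Fin 5 → ℂ) : Matrix (Fin 3) (Fin 3) ℂ :=
  fun i j => z ⟨i.1 + j.1, by omega⟩

/-- The 3×3 Hankel matrix of the coordinate polynomials on ℂ⁵. -/
noncomputable def hankelPoly : Matrix (Fin 3) (Fin 3) (MvPolynomial (Fin 5) ℂ) :=
  fun i j => MvPolynomial.X ⟨i.1 + j.1, by omega⟩

/-- The affine cone over the rational normal quartic. -/
def rnqCone (p : ℂ × ℂ) : Fin 5 → ℂ :=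
  fun i => p.1 ^ (4 - i.1) * p.2 ^ i.1

set_option maxHeartbeats 1000000 in
/-- The vanishing of all five partial derivatives of the Hankel determinant, explicitly. -/
theorem partials_iff (z : Fin 5 → ℂ) :
    (∀ i : Fin 5, MvPolynomial.eval z (MvPolynomial.pderiv i hankelPoly.det) = 0) ↔
    (z 2 * z 4 - z 3 ^ 2 = 0 ∧ z 1 * z 4 - z 2 * z 3 = 0 ∧
     z 0 * z 4 + 2 * z 1 * z 3 - 3 * z 2 ^ 2 = 0 ∧
     z 0 * z 3 - z 1 * z 2 = 0 ∧ z 0 * z 2 - z 1 ^ 2 = 0) := by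
  constructor
  · intro h
    have h0 := h 0; have h1 := h 1; have h2 := h 2; have h3 := h 3; have h4 := h 4
    simp only [hankelPoly, Matrix.det_fin_three, Matrix.cons_val',
      Matrix.cons_val_zero] at h0 h1 h2 h3 h4
    simp (config := { decide := true }) [pderiv_mul, pderiv_X, Pi.single_apply,
      Fin.ext_iff] at h0 h1 h2 h3 h4
    exact ⟨by linear_combination h0, by linear_combination -h1/2, by linear_combination h2,
      by linear_combination -h3/2, by linear_combination h4⟩
  · rintro ⟨e1, e2, e3, e4, e5⟩ i
    simp only [hankelPoly, Matrix.det_fin_three, Matrix.cons_val', Matrix.cons_val_zero]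
    fin_cases i
    · simp (config := { decide := true }) [pderiv_mul, pderiv_X, Pi.single_apply, Fin.ext_iff]
      linear_combination e1
    · simp (config := { decide := true }) [pderiv_mul, pderiv_X, Pi.single_apply, Fin.ext_iff]
      linear_combination -2*e2
    · simp (config := { decide := true }) [pderiv_mul, pderiv_X, Pi.single_apply, Fin.ext_iff]
      linear_combination e3
    · simp (config := { decide := true }) [pderiv_mul, pderiv_X, Pi.single_apply, Fin.ext_iff]
      linear_combination -2*e4
    · simp (config := { decide := true }) [pderiv_mul, pderiv_X, Pi.single_apply, Fin.ext_iff]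
      linear_combination e5

/-- A matrix of the form vecMulVec has rank at most 1. -/
lemma rank_vmv (w v : Fin 3 → ℂ) : (Matrix.vecMulVec w v).rank ≤ 1 := by
  rw [Matrix.vecMulVec_eq (Fin 1)]
  exact le_trans (Matrix.rank_mul_le_left _ _)
    (le_of_le_of_eq (Matrix.rank_le_card_width (Matrix.replicateCol (Fin 1) w)) (by simp))

/-- If a 3×3 matrix has rank at most 1 then all its 2×2 minors vanish. -/
lemma minor_eq_zero_of_rank_le_one (M : Matrix (Fin 3) (Fin 3) ℂ) (hr : M.rank ≤ 1)
    (r1 r2 c1 c2 : Fin 3) : M r1 c1 * M r2 c2 - M r1 c2 * M r2 c1 = 0 := by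
  by_contra hmin
  set u := M.mulVec (Pi.single c1 1) with hu
  set v := M.mulVec (Pi.single c2 1) with hv
  have hind : LinearIndependent ℂ ![u, v] := by
    rw [LinearIndependent.pair_iff]
    intro s t hst
    have h1 : s * M r1 c1 + t * M r1 c2 = 0 := by
      have := congrFun hst r1
      simpa [hu, hv, Matrix.mulVec_single, mul_comm] using this
    have h2 : s * M r2 c1 + t * M r2 c2 = 0 := by
      have := congrFun hst r2
      simpa [hu, hv, Matrix.mulVec_single, mul_comm] using this
    constructor
    · have hs : s * (M r1 c1 * M r2 c2 - M r1 c2 * M r2 c1) = 0 := by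
        linear_combination M r2 c2 * h1 - M r1 c2 * h2
      exact (mul_eq_zero.mp hs).resolve_right hmin
    · have ht : t * (M r1 c1 * M r2 c2 - M r1 c2 * M r2 c1) = 0 := by
        linear_combination M r1 c1 * h2 - M r2 c1 * h1
      exact (mul_eq_zero.mp ht).resolve_right hmin
  have hspan : Submodule.span ℂ (Set.range ![u, v]) ≤ LinearMap.range M.mulVecLin := by
    rw [Submodule.span_le]
    rintro x ⟨i, rfl⟩
    fin_cases i
    · exact ⟨Pi.single c1 1, rfl⟩
    · exact ⟨Pi.single c2 1, rfl⟩
  have h2 : (2 : ℕ) ≤ M.rank := by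
    have h := finrank_span_eq_card hind
    simp at h
    calc (2:ℕ) = Module.finrank ℂ (Submodule.span ℂ (Set.range ![u, v])) := h.symm
    _ ≤ Module.finrank ℂ (LinearMap.range M.mulVecLin) := Submodule.finrank_mono hspan
    _ = M.rank := rfl
  omega

/-- From the vanishing of the partials, deduce the two remaining 2×2 minors. -/
lemma m3m4 (z : Fin 5 → ℂ)
    (e1 : z 2 * z 4 - z 3 ^ 2 = 0)
    (e3 : z 0 * z 4 + 2 * z 1 * z 3 - 3 * z 2 ^ 2 = 0)
    (e4 : z 0 * z 3 - z 1 * z 2 = 0) :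
    z 1 * z 3 - z 2 ^ 2 = 0 ∧ z 0 * z 4 - z 2 ^ 2 = 0 := by
  by_cases hz2 : z 2 = 0
  · have h3 : z 3 = 0 := sq_eq_zero_iff.mp (by linear_combination -e1 + z 4 * hz2)
    exact ⟨by linear_combination z 1 * h3 - z 2 * hz2,
      by linear_combination e3 - 2 * z 1 * h3 + 2 * z 2 * hz2⟩
  · have h : z 2 * (z 1 * z 3 - z 2 ^ 2) = 0 := by
      linear_combination (z 2 * e3 - z 0 * e1 - z 3 * e4) / 3
    have hm3 : z 1 * z 3 - z 2 ^ 2 = 0 := (mul_eq_zero.mp h).resolve_left hz2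
    exact ⟨hm3, by linear_combination e3 - 2 * hm3⟩

/-- From the vanishing of the 2×2 minors, a nonzero z lies on the cone over the RNQ. -/
lemma cone_of_minors (z : Fin 5 → ℂ)
    (e1 : z 2 * z 4 - z 3 ^ 2 = 0)
    (e4 : z 0 * z 3 - z 1 * z 2 = 0)
    (e5 : z 0 * z 2 - z 1 ^ 2 = 0)
    (m3 : z 1 * z 3 - z 2 ^ 2 = 0)
    (m4 : z 0 * z 4 - z 2 ^ 2 = 0) :
    ∃ (p : ℂ × ℂ) (a : ℂ), z = a • rnqCone p := by
  by_cases h0 : z 0 = 0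
  · have h1 : z 1 = 0 := sq_eq_zero_iff.mp (by linear_combination -e5 + z 2 * h0)
    have h2 : z 2 = 0 := sq_eq_zero_iff.mp (by linear_combination -m3 + z 3 * h1)
    have h3 : z 3 = 0 := sq_eq_zero_iff.mp (by linear_combination -e1 + z 4 * h2)
    refine ⟨(0, 1), z 4, funext fun i => ?_⟩
    have r2 : z ⟨2, by norm_num⟩ = z 2 := rfl
    have r3 : z ⟨3, by norm_num⟩ = z 3 := rfl
    have r4 : z ⟨4, by norm_num⟩ = z 4 := rfl
    fin_cases i <;>
      norm_num [rnqCone, r2, r3, r4, h0, h1, h2, h3]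
  · refine ⟨(1, z 1 / z 0), z 0, funext fun i => ?_⟩
    have r2 : z ⟨2, by norm_num⟩ = z 2 := rfl
    have r3 : z ⟨3, by norm_num⟩ = z 3 := rfl
    have r4 : z ⟨4, by norm_num⟩ = z 4 := rfl
    fin_cases i <;>
      norm_num [rnqCone, r2, r3, r4, smul_eq_mul]
    · field_simp
    · rw [div_pow, mul_div_assoc', eq_div_iff (pow_ne_zero _ h0)]
      linear_combination z 0 * e5
    · rw [div_pow, mul_div_assoc', eq_div_iff (pow_ne_zero _ h0)]
      linear_combination z 0 ^ 2 * e4 + z 0 * z 1 * e5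
    · rw [div_pow, mul_div_assoc', eq_div_iff (pow_ne_zero _ h0)]
      linear_combination z 0 ^ 3 * m4 + z 0 * (z 1 ^ 2 + z 0 * z 2) * e5

/-- The Hankel matrix of a point of the cone over the RNQ has rank at most 1. -/
lemma rank_cone (p : ℂ × ℂ) (a : ℂ) : (hankel (a • rnqCone p)).rank ≤ 1 := by
  have h : hankel (a • rnqCone p) =
      Matrix.vecMulVec (fun i => a * p.1 ^ (2 - i.1) * p.2 ^ i.1)
        (fun j => p.1 ^ (2 - j.1) * p.2 ^ j.1) := by
    ext i j
    fin_cases i <;> fin_cases j <;>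
      · simp [hankel, rnqCone, Matrix.vecMulVec_apply, smul_eq_mul,
          show ((3:Fin 5):ℕ) = 3 from rfl, show ((4:Fin 5):ℕ) = 4 from rfl]
        ring
  rw [h]
  exact rank_vmv _ _

theorem singular_locus_of_hankel_cubic (z : Fin 5 → ℂ) (hz : z ≠ 0) :
    ((∀ i : Fin 5, MvPolynomial.eval z (MvPolynomial.pderiv i hankelPoly.det) = 0) ↔
      (hankel z).rank ≤ 1) ∧
    ((hankel z).rank ≤ 1 ↔ ∃ (p : ℂ × ℂ) (a : ℂ), z = a • rnqCone p) := by
  -- extract the minors from the rank condition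
  have minors_of_rank : (hankel z).rank ≤ 1 →
      (z 2 * z 4 - z 3 ^ 2 = 0 ∧ z 1 * z 4 - z 2 * z 3 = 0 ∧
       z 0 * z 3 - z 1 * z 2 = 0 ∧ z 0 * z 2 - z 1 ^ 2 = 0 ∧
       z 1 * z 3 - z 2 ^ 2 = 0 ∧ z 0 * z 4 - z 2 ^ 2 = 0) := by
    intro hr
    have e1 : z 2 * z 4 - z 3 * z 3 = 0 :=
      minor_eq_zero_of_rank_le_one (hankel z) hr 1 2 1 2
    have e2 : z 1 * z 4 - z 2 * z 3 = 0 :=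
      minor_eq_zero_of_rank_le_one (hankel z) hr 0 2 1 2
    have e4 : z 0 * z 3 - z 2 * z 1 = 0 :=
      minor_eq_zero_of_rank_le_one (hankel z) hr 0 1 0 2
    have e5 : z 0 * z 2 - z 1 * z 1 = 0 :=
      minor_eq_zero_of_rank_le_one (hankel z) hr 0 1 0 1
    have m3 : z 1 * z 3 - z 2 * z 2 = 0 :=
      minor_eq_zero_of_rank_le_one (hankel z) hr 0 1 1 2
    have m4 : z 0 * z 4 - z 2 * z 2 = 0 :=
      minor_eq_zero_of_rank_le_one (hankel z) hr 0 2 0 2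
    exact ⟨by linear_combination e1, e2, by linear_combination e4,
      by linear_combination e5, by linear_combination m3, by linear_combination m4⟩
  have cone_of_rank : (hankel z).rank ≤ 1 → ∃ (p : ℂ × ℂ) (a : ℂ), z = a • rnqCone p := by
    intro hr
    obtain ⟨e1, e2, e4, e5, m3, m4⟩ := minors_of_rank hr
    exact cone_of_minors z e1 e4 e5 m3 m4
  have rank_of_cone : (∃ (p : ℂ × ℂ) (a : ℂ), z = a • rnqCone p) → (hankel z).rank ≤ 1 := by
    rintro ⟨p, a, rfl⟩
    exact rank_cone p a
  refine ⟨⟨fun h => ?_, fun hr => ?_⟩, cone_of_rank, rank_of_cone⟩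
  · obtain ⟨e1, e2, e3, e4, e5⟩ := (partials_iff z).mp h
    obtain ⟨m3, m4⟩ := m3m4 z e1 e3 e4
    exact rank_of_cone (cone_of_minors z e1 e4 e5 m3 m4)
  · obtain ⟨e1, e2, e4, e5, m3, m4⟩ := minors_of_rank hr
    exact (partials_iff z).mpr ⟨e1, e2, by linear_combination m4 + 2 * m3, e4, e5⟩
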